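/- Let p be an odd prime and d ≥ 1 an integer. In 𝔽_p[t][H], let g = ∏_{k=0}^{d}(H − k·t)² and let f = (H^p − t^{p−1}·H)·∏_{k=1}^{d−1}(H − k·t)². Let Rem be the remainder of f upon division by g. Then the coefficient of H^{2d+1} in Rem equals −2·d^{p−3}·t^{p−3} in 𝔽_p[t] (where d^{p−3} is computed in 𝔽_p; in particular this coefficient is 0 when p divides d). -/
import Mathlib


open Polynomial Finset

/-- In `𝔽_p[t][H]` with `g = ∏_{k=0}^{d}(H-kt)²` and
`f = (H^p - t^{p-1}H)·∏_{k=1}^{d-1}(H-kt)²`, the coefficient of `H^{2d+1}` in the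
remainder of `f` modulo `g` equals `-2·d^{p-3}·t^{p-3}`. -/
theorem qst_structure_constant_11 (p : ℕ) (hp : p.Prime) (hodd : p ≠ 2) (d : ℕ) (hd : 1 ≤ d) :
    (((Polynomial.X ^ p
          - Polynomial.C ((Polynomial.X : Polynomial (ZMod p)) ^ (p - 1)) * Polynomial.X)
        * ∏ k ∈ Finset.Icc 1 (d - 1),
            (Polynomial.X - Polynomial.C ((k : ZMod p) • (Polynomial.X : Polynomial (ZMod p)))) ^ 2)
      %ₘ (∏ k ∈ Finset.range (d + 1),
            (Polynomial.X - Polynomial.C ((k : ZMod p) • (Polynomial.X : Polynomial (ZMod p)))) ^ 2)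
      : Polynomial (Polynomial (ZMod p))).coeff (2 * d + 1)
      = Polynomial.C (-2 * (d : ZMod p) ^ (p - 3)) * (Polynomial.X : Polynomial (ZMod p)) ^ (p - 3) := by
  have hp2 : 2 ≤ p := hp.two_le
  have hp3 : 3 ≤ p := by omega
  haveI : Fact p.Prime := ⟨hp⟩
  set T : Polynomial (ZMod p) := X with hT
  set dz : ZMod p := (d : ZMod p) with hdz
  set c : Polynomial (ZMod p) := dz • T with hc
  set A : Polynomial (ZMod p) := C (-2 * dz ^ (p - 3)) * T ^ (p - 3) with hA
  set B : Polynomial (ZMod p) := C (3 * dz ^ (p - 2)) * T ^ (p - 2) with hB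
  set P : Polynomial (Polynomial (ZMod p)) :=
    ∏ k ∈ Finset.Icc 1 (d - 1), (X - C ((k : ZMod p) • T)) ^ 2 with hP
  set g : Polynomial (Polynomial (ZMod p)) :=
    ∏ k ∈ Finset.range (d + 1), (X - C ((k : ZMod p) • T)) ^ 2 with hg
  set f : Polynomial (Polynomial (ZMod p)) := (X ^ p - C (T ^ (p - 1)) * X) * P with hf
  set s : Polynomial (Polynomial (ZMod p)) :=
    C A * X ^ 3 + C B * X ^ 2 - C (T ^ (p - 1)) * X with hs
  set Q : Polynomial (Polynomial (ZMod p)) := X ^ (p - 2) - C A * X - C B with hQ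
  have hcC : c = C dz * T := by rw [hc, smul_eq_C_mul]
  have e32 : p - 3 + 1 = p - 2 := by omega
  -- Q vanishes doubly at c
  have hevalQ : Q.eval c = 0 := by
    rw [hQ]
    simp only [eval_sub, eval_mul, eval_pow, eval_C, eval_X]
    rw [hcC, hA, hB, ← e32]
    simp only [map_mul, map_neg, map_pow, map_ofNat]
    ring
  have hevalQ' : Q.derivative.eval c = 0 := by
    rw [hQ]
    simp only [derivative_sub, derivative_mul, derivative_C, derivative_X, derivative_X_pow,
      zero_mul, mul_one, zero_add, sub_zero]
    simp only [eval_sub, eval_mul, eval_pow, eval_C, eval_X]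
    have hcast : ((p - 2 : ℕ) : ZMod p) = -2 := by
      rw [Nat.cast_sub hp2, ZMod.natCast_self, zero_sub]
      norm_num
    have hC2 : ((p - 2 : ℕ) : Polynomial (ZMod p)) = C (-2 : ZMod p) := by
      rw [← Polynomial.C_eq_natCast, hcast]
    rw [hC2]
    have e21 : p - 2 - 1 = p - 3 := by omega
    rw [e21, hcC, hA]
    simp only [map_mul, map_neg, map_pow, map_ofNat]
    ring
  have hQdvd : (X - C c) ^ 2 ∣ Q := by
    obtain ⟨Q1, hQ1⟩ := (dvd_iff_isRoot (p := Q) (a := c)).mpr hevalQ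
    have hd1 : Q.derivative = Q1 + (X - C c) * Q1.derivative := by
      rw [hQ1, derivative_mul, derivative_sub, derivative_X, derivative_C, sub_zero, one_mul]
    have hQ1root : Q1.IsRoot c := by
      have h := congrArg (eval c) hd1
      rw [hevalQ'] at h
      simpa using h.symm
    rw [hQ1, sq]
    exact mul_dvd_mul_left _ (dvd_iff_isRoot.mpr hQ1root)
  -- factor g
  have hIcc : Finset.Icc 1 (d - 1) = Finset.Ico 1 d := by
    rw [← Finset.Ico_add_one_right_eq_Icc]; congr 1; omega
  have hgfact : g = X ^ 2 * (X - C c) ^ 2 * P := by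
    rw [hg, Finset.range_eq_Ico,
      Finset.prod_eq_prod_Ico_succ_bot (by omega : 0 < d + 1),
      Finset.prod_Ico_succ_top (by omega : 1 ≤ d), hP, hIcc]
    simp only [Nat.cast_zero, zero_smul, map_zero, sub_zero]
    rw [hc, hdz]
    ring
  -- f - P*s = P * (X^2 * Q)
  have hfsub : f - P * s = P * (X ^ 2 * Q) := by
    have hXp : (X : Polynomial (Polynomial (ZMod p))) ^ p = X ^ (p - 2) * X ^ 2 := by
      rw [← pow_add]; congr 1; omega
    rw [hf, hs, hQ, hXp]; ring
  have hgdvd : g ∣ f - P * s := by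
    rw [hfsub, hgfact, mul_comm P]
    exact mul_dvd_mul (mul_dvd_mul_left _ hQdvd) dvd_rfl
  -- monicity and degrees
  have hmonfac : ∀ k : ℕ,
      (((X : Polynomial (Polynomial (ZMod p))) - C ((k : ZMod p) • T)) ^ 2).Monic :=
    fun k => (monic_X_sub_C _).pow 2
  have hgmon : g.Monic := monic_prod_of_monic _ _ fun k _ => hmonfac k
  have hPmon : P.Monic := monic_prod_of_monic _ _ fun k _ => hmonfac k
  have hdeg2 : ∀ k : ℕ,
      (((X : Polynomial (Polynomial (ZMod p))) - C ((k : ZMod p) • T)) ^ 2).natDegree = 2 := by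
    intro k; rw [natDegree_pow, natDegree_X_sub_C]
  have hPdeg : P.natDegree = 2 * d - 2 := by
    rw [hP, natDegree_prod_of_monic _ _ fun k _ => hmonfac k]
    rw [Finset.sum_congr rfl fun k _ => hdeg2 k, Finset.sum_const, Nat.card_Icc]
    simp; omega
  have hgdeg : g.natDegree = 2 * d + 2 := by
    rw [hg, natDegree_prod_of_monic _ _ fun k _ => hmonfac k]
    rw [Finset.sum_congr rfl fun k _ => hdeg2 k, Finset.sum_const, Finset.card_range]
    simp; omega
  have hsdeg : s.degree ≤ 3 := by
    rw [hs]
    refine le_trans (degree_sub_le _ _) (max_le (le_trans (degree_add_le _ _) (max_le ?_ ?_)) ?_)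
    · refine le_trans (degree_mul_le _ _) ?_
      calc (C A).degree + (X ^ 3 : Polynomial (Polynomial (ZMod p))).degree ≤ 0 + 3 :=
            add_le_add degree_C_le (le_of_eq (degree_X_pow 3))
        _ = 3 := by simp
    · refine le_trans (degree_mul_le _ _) ?_
      calc (C B).degree + (X ^ 2 : Polynomial (Polynomial (ZMod p))).degree ≤ 0 + 2 :=
            add_le_add degree_C_le (le_of_eq (degree_X_pow 2))
        _ = 2 := by simp
        _ ≤ 3 := by norm_num
    · refine le_trans (degree_mul_le _ _) ?_
      calc (C (T ^ (p-1))).degree + (X : Polynomial (Polynomial (ZMod p))).degree ≤ 0 + 1 :=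
            add_le_add degree_C_le degree_X_le
        _ = 1 := by simp
        _ ≤ 3 := by norm_num
  have hPsdeg : (P * s).degree < g.degree := by
    have hgd : g.degree = ((2 * d + 2 : ℕ) : WithBot ℕ) := by
      rw [degree_eq_natDegree hgmon.ne_zero, hgdeg]
    rw [hgd]
    refine lt_of_le_of_lt (degree_mul_le _ _) ?_
    calc P.degree + s.degree ≤ ((2 * d - 2 : ℕ) : WithBot ℕ) + ((3 : ℕ) : WithBot ℕ) :=
          add_le_add (hPdeg ▸ degree_le_natDegree) (by exact_mod_cast hsdeg)
      _ = ((2 * d - 2 + 3 : ℕ) : WithBot ℕ) := by rw [← Nat.cast_add]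
      _ < ((2 * d + 2 : ℕ) : WithBot ℕ) := by exact_mod_cast (by omega : 2*d-2+3 < 2*d+2)
  have hmod : f %ₘ g = P * s := by
    have h1 : (f - P * s) %ₘ g = 0 := (modByMonic_eq_zero_iff_dvd hgmon).mpr hgdvd
    have h2 : (P * s) %ₘ g = P * s := (modByMonic_eq_self_iff hgmon).mpr hPsdeg
    have hsplit : f = (f - P * s) + P * s := by ring
    rw [hsplit, add_modByMonic, h1, h2, zero_add]
  -- final coefficient computation
  have hPcoeff : P.coeff (2 * d - 2) = 1 := by
    have h := hPmon.coeff_natDegree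
    rwa [hPdeg] at h
  have hsplit2 : P * s = C A * (P * X ^ 3) + (C B * (P * X ^ 2) - C (T ^ (p-1)) * (P * X)) := by
    rw [hs]; ring
  have hz2 : (P * X ^ 2).coeff (2 * d + 1) = 0 := by
    refine coeff_eq_zero_of_natDegree_lt (lt_of_le_of_lt natDegree_mul_le ?_)
    rw [hPdeg, natDegree_X_pow]; omega
  have hz1 : (P * X).coeff (2 * d + 1) = 0 := by
    refine coeff_eq_zero_of_natDegree_lt (lt_of_le_of_lt natDegree_mul_le ?_)
    rw [hPdeg, natDegree_X]; omega
  have h3 : (P * X ^ 3).coeff (2 * d + 1) = 1 := by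
    rw [show 2 * d + 1 = 2 * d - 2 + 3 from by omega, coeff_mul_X_pow, hPcoeff]
  rw [hmod, hsplit2, coeff_add, coeff_sub, coeff_C_mul, coeff_C_mul, coeff_C_mul, h3, hz2, hz1,
    hA]
  ring
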